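/- For a standard Gaussian w and constant c ∈ ℝ, E[w · sign(w + c)] = 2N(c; 0, 1), where N(·;0,1) is the standard normal density; more generally for jointly Gaussian (x, z) with z ~ N(z̄, σ_z²) and Cov(x, z) = γ, E[(x − x̄) sign(z)] = 2γ N(z̄/σ_z; 0,1)/σ_z. -/

import Mathlib

open MeasureTheory Real NNReal ENNReal

/-- Sign function taking values ±1. -/
noncomputable def sgn (z : ℝ) : ℝ := if 0 < z then 1 else -1

/-- Standard normal density `N(t; 0, 1)`. -/
noncomputable def stdNormalPDF (t : ℝ) : ℝ :=
  (Real.sqrt (2 * Real.pi))⁻¹ * Real.exp (-t ^ 2 / 2)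

/-- Density of a bivariate Gaussian with means `xbar, zbar`, standard deviations
`σx, σz` and correlation `ρ`. -/
noncomputable def bivariateDensity (xbar zbar σx σz ρ x z : ℝ) : ℝ :=
  (2 * Real.pi * σx * σz * Real.sqrt (1 - ρ ^ 2))⁻¹ *
    Real.exp (-(((x - xbar) / σx) ^ 2 - 2 * ρ * ((x - xbar) / σx) * ((z - zbar) / σz)
        + ((z - zbar) / σz) ^ 2) / (2 * (1 - ρ ^ 2)))

lemma myHasDeriv (b t : ℝ) (hb : 0 < b) :
    HasDerivAt (fun t : ℝ => -Real.exp (-b * t ^ 2) / (2 * b)) (t * Real.exp (-b * t ^ 2)) t := by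
  have h1 : HasDerivAt (fun t : ℝ => -b * t ^ 2) (-b * (2 * t)) t := by
    simpa using ((hasDerivAt_pow 2 t).const_mul (-b))
  have h3 := (h1.exp.neg).div_const (2 * b)
  refine h3.congr_deriv ?_
  rw [_root_.div_eq_iff (by positivity)]
  ring

lemma myTendTop (b : ℝ) (hb : 0 < b) :
    Filter.Tendsto (fun t : ℝ => -Real.exp (-b * t ^ 2) / (2 * b)) Filter.atTop (nhds 0) := by
  have h : Filter.Tendsto (fun t : ℝ => -b * t ^ 2) Filter.atTop Filter.atBot := by
    have h2 : Filter.Tendsto (fun t : ℝ => b * t ^ 2) Filter.atTop Filter.atTop :=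
      (Filter.tendsto_pow_atTop two_ne_zero).const_mul_atTop hb
    exact (Filter.tendsto_neg_atTop_atBot.comp h2).congr fun t => by simp [neg_mul]
  have := (Real.tendsto_exp_atBot.comp h).neg.div_const (2 * b)
  simpa using this

lemma myTendBot (b : ℝ) (hb : 0 < b) :
    Filter.Tendsto (fun t : ℝ => -Real.exp (-b * t ^ 2) / (2 * b)) Filter.atBot (nhds 0) := by
  have hsq : Filter.Tendsto (fun t : ℝ => t ^ 2) Filter.atBot Filter.atTop := by
    have := (Filter.tendsto_pow_atTop (n := 2) two_ne_zero).comp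
      (Filter.tendsto_neg_atBot_atTop (G := ℝ))
    exact this.congr fun t => by simp [Function.comp, neg_pow]
  have h : Filter.Tendsto (fun t : ℝ => -b * t ^ 2) Filter.atBot Filter.atBot := by
    have h2 : Filter.Tendsto (fun t : ℝ => b * t ^ 2) Filter.atBot Filter.atTop :=
      hsq.const_mul_atTop hb
    exact (Filter.tendsto_neg_atTop_atBot.comp h2).congr fun t => by simp [neg_mul]
  have := (Real.tendsto_exp_atBot.comp h).neg.div_const (2 * b)
  simpa using this

lemma intIoi (b : ℝ) (hb : 0 < b) (a : ℝ) :
    ∫ t in Set.Ioi a, t * Real.exp (-b * t ^ 2) = Real.exp (-b * a ^ 2) / (2 * b) := by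
  have := integral_Ioi_of_hasDerivAt_of_tendsto'
    (f := fun t : ℝ => -Real.exp (-b * t ^ 2) / (2 * b))
    (f' := fun t : ℝ => t * Real.exp (-b * t ^ 2)) (a := a) (m := 0)
    (fun x _ => myHasDeriv b x hb) (integrable_mul_exp_neg_mul_sq hb).integrableOn
    (myTendTop b hb)
  rw [this]; ring

lemma intIic (b : ℝ) (hb : 0 < b) (a : ℝ) :
    ∫ t in Set.Iic a, t * Real.exp (-b * t ^ 2) = -(Real.exp (-b * a ^ 2) / (2 * b)) := by
  have := integral_Iic_of_hasDerivAt_of_tendsto'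
    (f := fun t : ℝ => -Real.exp (-b * t ^ 2) / (2 * b))
    (f' := fun t : ℝ => t * Real.exp (-b * t ^ 2)) (a := a) (m := 0)
    (fun x _ => myHasDeriv b x hb) (integrable_mul_exp_neg_mul_sq hb).integrableOn
    (myTendBot b hb)
  rw [this]; ring

lemma intZero (b : ℝ) (hb : 0 < b) : ∫ t : ℝ, t * Real.exp (-b * t ^ 2) = 0 := by
  rw [← intervalIntegral.integral_Iic_add_Ioi (b := (0 : ℝ))
    (integrable_mul_exp_neg_mul_sq hb).integrableOn
    (integrable_mul_exp_neg_mul_sq hb).integrableOn,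
    intIoi b hb 0, intIic b hb 0]
  ring

lemma half_pos' : (0:ℝ) < 1/2 := by norm_num

lemma Kcore (c : ℝ) :
    ∫ t : ℝ, t * sgn (t + c) * Real.exp (-(1/2 : ℝ) * t ^ 2)
      = 2 * Real.exp (-(1/2 : ℝ) * c ^ 2) := by
  have hneg : Set.EqOn (fun t : ℝ => -(t * Real.exp (-(1/2 : ℝ) * t ^ 2)))
      (fun t : ℝ => t * sgn (t + c) * Real.exp (-(1/2 : ℝ) * t ^ 2)) (Set.Iic (-c)) := by
    intro t ht
    have h1 : ¬ (0 < t + c) := by simp only [Set.mem_Iic] at ht; linarith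
    simp only [sgn, if_neg h1]
    ring
  have hpos : Set.EqOn (fun t : ℝ => t * Real.exp (-(1/2 : ℝ) * t ^ 2))
      (fun t : ℝ => t * sgn (t + c) * Real.exp (-(1/2 : ℝ) * t ^ 2)) (Set.Ioi (-c)) := by
    intro t ht
    have h1 : 0 < t + c := by simp only [Set.mem_Ioi] at ht; linarith
    simp only [sgn, if_pos h1]
    ring
  have hIic : IntegrableOn (fun t : ℝ => t * sgn (t + c) * Real.exp (-(1/2 : ℝ) * t ^ 2))
      (Set.Iic (-c)) volume :=
    ((integrable_mul_exp_neg_mul_sq half_pos').neg.integrableOn).congr_fun hneg measurableSet_Iic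
  have hIoi : IntegrableOn (fun t : ℝ => t * sgn (t + c) * Real.exp (-(1/2 : ℝ) * t ^ 2))
      (Set.Ioi (-c)) volume :=
    ((integrable_mul_exp_neg_mul_sq half_pos').integrableOn).congr_fun hpos measurableSet_Ioi
  rw [← intervalIntegral.integral_Iic_add_Ioi (b := -c) hIic hIoi]
  have e1 : ∫ t in Set.Iic (-c), t * sgn (t + c) * Real.exp (-(1/2 : ℝ) * t ^ 2)
      = Real.exp (-(1/2 : ℝ) * c ^ 2) := by
    rw [← setIntegral_congr_fun measurableSet_Iic hneg]
    rw [integral_neg, intIic (1/2) half_pos' (-c)]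
    simp [neg_neg, neg_sq]
  have e2 : ∫ t in Set.Ioi (-c), t * sgn (t + c) * Real.exp (-(1/2 : ℝ) * t ^ 2)
      = Real.exp (-(1/2 : ℝ) * c ^ 2) := by
    rw [← setIntegral_congr_fun measurableSet_Ioi hpos]
    rw [intIoi (1/2) half_pos' (-c)]
    rw [neg_sq]
    ring
  rw [e1, e2]
  ring

lemma K (c : ℝ) : ∫ t : ℝ, t * sgn (t + c) * stdNormalPDF t = 2 * stdNormalPDF c := by
  have h : ∀ t : ℝ, t * sgn (t + c) * stdNormalPDF t
      = (Real.sqrt (2 * Real.pi))⁻¹ * (t * sgn (t + c) * Real.exp (-(1/2 : ℝ) * t ^ 2)) := by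
    intro t
    rw [stdNormalPDF, show -t^2/2 = -(1/2 : ℝ) * t^2 by ring]
    ring
  simp only [h]
  rw [integral_const_mul, Kcore c, stdNormalPDF, show -c^2/2 = -(1/2 : ℝ) * c^2 by ring]
  ring

lemma part1 (c : ℝ) :
    (∫ w, w * sgn (w + c) ∂(ProbabilityTheory.gaussianReal 0 1)) = 2 * stdNormalPDF c := by
  rw [ProbabilityTheory.gaussianReal_of_var_ne_zero 0 one_ne_zero]
  have hpdf : ProbabilityTheory.gaussianPDF 0 1
      = fun x => ((Real.toNNReal (ProbabilityTheory.gaussianPDFReal 0 1 x) : ℝ≥0) : ℝ≥0∞) :=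
    rfl
  rw [hpdf, integral_withDensity_eq_integral_smul
    ((ProbabilityTheory.measurable_gaussianPDFReal 0 1).real_toNNReal) _]
  have h : ∀ x : ℝ, (Real.toNNReal (ProbabilityTheory.gaussianPDFReal 0 1 x) : ℝ≥0)
        • (x * sgn (x + c)) = x * sgn (x + c) * stdNormalPDF x := by
    intro x
    rw [NNReal.smul_def, Real.coe_toNNReal _ (ProbabilityTheory.gaussianPDFReal_nonneg 0 1 x)]
    rw [ProbabilityTheory.gaussianPDFReal, stdNormalPDF]
    push_cast
    rw [smul_eq_mul]
    ring_nf
  simp only [h]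
  rw [show (fun x : ℝ => x * sgn (x + c) * stdNormalPDF x)
    = fun t : ℝ => t * sgn (t + c) * stdNormalPDF t from rfl]
  exact K c

lemma hfact (xbar zbar σx σz ρ : ℝ) (hσx : 0 < σx) (hσz : 0 < σz) (hρ2 : ρ^2 < 1) (x z : ℝ) :
    bivariateDensity xbar zbar σx σz ρ x z
      = (σz⁻¹ * stdNormalPDF ((z - zbar)/σz)) *
        ((σx * Real.sqrt (1 - ρ^2))⁻¹ *
          stdNormalPDF ((x - (xbar + ρ * σx * ((z - zbar)/σz))) / (σx * Real.sqrt (1 - ρ^2)))) := by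
  have h1 : (0:ℝ) < 1 - ρ^2 := by linarith
  rw [bivariateDensity, stdNormalPDF, stdNormalPDF]
  set q := Real.sqrt (1 - ρ^2) with hqdef
  have hq0 : 0 < q := Real.sqrt_pos.2 h1
  have hq2 : q^2 = 1 - ρ^2 := Real.sq_sqrt h1.le
  set r := Real.sqrt (2*π) with hrdef
  have hr0 : 0 < r := Real.sqrt_pos.2 (by positivity)
  have hr2 : r^2 = 2*π := Real.sq_sqrt (by positivity)
  have key : ∀ B1 B2 : ℝ, σz⁻¹ * (r⁻¹ * Real.exp B1) * ((σx*q)⁻¹ * (r⁻¹ * Real.exp B2))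
      = (2*π*σx*σz*q)⁻¹ * Real.exp (B1 + B2) := by
    intro B1 B2
    rw [Real.exp_add]
    rw [show 2*π = r^2 from hr2.symm]
    field_simp
  have hu : (x - (xbar + ρ * σx * ((z - zbar)/σz))) / (σx * q)
      = ((x - xbar)/σx - ρ * ((z - zbar)/σz))/q := by
    field_simp
    ring
  rw [key, hu]
  congr 1
  rw [Real.exp_eq_exp]
  have expand : ∀ u t : ℝ, -(u^2 - 2*ρ*u*t + t^2)/(2*(1-ρ^2)) = -t^2/2 + -((u - ρ*t)/q)^2/2 := by
    intro u t
    rw [div_pow, hq2]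
    field_simp
    ring
  exact expand ((x - xbar)/σx) ((z - zbar)/σz)

lemma hmoment (xbar m sp : ℝ) (hsp : 0 < sp) :
    ∫ x : ℝ, (x - xbar) * (sp⁻¹ * stdNormalPDF ((x - m)/sp)) = m - xbar := by
  have hb : (0:ℝ) < 1/(2*sp^2) := by positivity
  set b : ℝ := 1/(2*sp^2) with hbdef
  have hφ : ∀ y : ℝ, stdNormalPDF (y/sp) = (Real.sqrt (2*π))⁻¹ * Real.exp (-b*y^2) := by
    intro y
    rw [stdNormalPDF, show -(y/sp)^2/2 = -b*y^2 by rw [hbdef]; field_simp; try ring; try tauto]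
  have step1 : (fun x : ℝ => (x - xbar) * (sp⁻¹ * stdNormalPDF ((x - m)/sp)))
      = fun x : ℝ => (fun y : ℝ => (y + m - xbar) * (sp⁻¹ * stdNormalPDF (y/sp))) (x - m) := by
    funext x
    simp only
    ring_nf
  rw [step1, integral_sub_right_eq_self (fun y : ℝ => (y + m - xbar) * (sp⁻¹ * stdNormalPDF (y/sp))) m]
  have i1 : Integrable (fun y : ℝ => (sp⁻¹ * (Real.sqrt (2*π))⁻¹) * (y * Real.exp (-b*y^2))) :=
    (integrable_mul_exp_neg_mul_sq hb).const_mul _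
  have i2 : Integrable (fun y : ℝ => ((m - xbar) * sp⁻¹ * (Real.sqrt (2*π))⁻¹) * Real.exp (-b*y^2)) :=
    (integrable_exp_neg_mul_sq hb).const_mul _
  have hfun : (fun y : ℝ => (y + m - xbar) * (sp⁻¹ * stdNormalPDF (y/sp)))
      = fun y : ℝ => (sp⁻¹ * (Real.sqrt (2*π))⁻¹) * (y * Real.exp (-b*y^2))
        + ((m - xbar) * sp⁻¹ * (Real.sqrt (2*π))⁻¹) * Real.exp (-b*y^2) := by
    funext y
    rw [hφ y]
    ring
  rw [hfun, integral_add i1 i2, integral_const_mul, integral_const_mul, intZero b hb,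
    integral_gaussian b]
  have hsqrt : Real.sqrt (π/b) = Real.sqrt (2*π) * sp := by
    rw [show π/b = (2*π) * sp^2 by rw [hbdef]; field_simp,
      Real.sqrt_mul (by positivity), Real.sqrt_sq hsp.le]
  rw [hsqrt]
  have h2π : Real.sqrt (2*π) ≠ 0 := by positivity
  field_simp
  ring

section Part2

variable (xbar zbar σx σz ρ : ℝ)

lemma sgn_abs (z : ℝ) : |sgn z| = 1 := by
  unfold sgn; split <;> norm_num

lemma measurable_sgn : Measurable sgn := by
  unfold sgn
  exact Measurable.ite measurableSet_Ioi measurable_const measurable_const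

lemma hintegrable (hσx : 0 < σx) (hσz : 0 < σz) (hρ2 : ρ^2 < 1) :
    Integrable (fun p : ℝ × ℝ =>
      (p.1 - xbar) * sgn p.2 * bivariateDensity xbar zbar σx σz ρ p.1 p.2) := by
  have h1 : (0:ℝ) < 1 - ρ^2 := by linarith
  have hq0 : 0 < Real.sqrt (1 - ρ^2) := Real.sqrt_pos.2 h1
  set C : ℝ := (2 * π * σx * σz * Real.sqrt (1 - ρ^2))⁻¹ with hCdef
  have hC0 : 0 < C := by positivity
  -- measurability
  have hcont : Continuous fun p : ℝ × ℝ => bivariateDensity xbar zbar σx σz ρ p.1 p.2 := by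
    unfold bivariateDensity
    fun_prop
  have hmeas : AEStronglyMeasurable (fun p : ℝ × ℝ =>
      (p.1 - xbar) * sgn p.2 * bivariateDensity xbar zbar σx σz ρ p.1 p.2) volume := by
    apply Measurable.aestronglyMeasurable
    exact ((measurable_fst.sub measurable_const).mul
      (measurable_sgn.comp measurable_snd)).mul hcont.measurable
  -- dominating function
  have hb1 : (0:ℝ) < 1/(4*σx^2) := by positivity
  have hb2 : (0:ℝ) < 1/(4*σz^2) := by positivity
  have f1int : Integrable (fun x : ℝ => |x| * Real.exp (-(1/(4*σx^2)) * x^2)) := by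
    have := (integrable_mul_exp_neg_mul_sq hb1).abs
    refine this.congr (Filter.Eventually.of_forall fun x => ?_)
    simp [abs_mul, abs_of_pos (Real.exp_pos _)]
  have f1int' : Integrable (fun x : ℝ => |x - xbar| * Real.exp (-(1/(4*σx^2)) * (x - xbar)^2)) :=
    f1int.comp_sub_right xbar
  have f2int : Integrable (fun z : ℝ => Real.exp (-(1/(4*σz^2)) * (z - zbar)^2)) :=
    (integrable_exp_neg_mul_sq hb2).comp_sub_right zbar
  have hG : Integrable (fun p : ℝ × ℝ =>
      C * ((|p.1 - xbar| * Real.exp (-(1/(4*σx^2)) * (p.1 - xbar)^2))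
        * Real.exp (-(1/(4*σz^2)) * (p.2 - zbar)^2))) := by
    rw [Measure.volume_eq_prod]
    exact (f1int'.mul_prod f2int).const_mul C
  refine hG.mono' hmeas (Filter.Eventually.of_forall fun p => ?_)
  obtain ⟨x, z⟩ := p
  simp only
  rw [norm_mul, norm_mul]
  have hd0 : 0 ≤ bivariateDensity xbar zbar σx σz ρ x z := by
    rw [bivariateDensity]
    positivity
  rw [Real.norm_eq_abs, Real.norm_eq_abs, Real.norm_eq_abs, sgn_abs, mul_one,
    abs_of_nonneg hd0]
  -- key bound on the density
  have hkey : bivariateDensity xbar zbar σx σz ρ x z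
      ≤ C * (Real.exp (-((x - xbar)/σx)^2/4) * Real.exp (-((z - zbar)/σz)^2/4)) := by
    rw [bivariateDensity, ← Real.exp_add, ← hCdef]
    have hCle : _ ≤ _ := le_refl C
    apply mul_le_mul_of_nonneg_left _ hC0.le
    apply Real.exp_le_exp.2
    set u := (x - xbar)/σx
    set t := (z - zbar)/σz
    have key2 : (u^2 + t^2)/4 ≤ (u^2 - 2*ρ*u*t + t^2)/(2*(1-ρ^2)) := by
      rw [div_le_div_iff₀ (by norm_num) (by linarith)]
      nlinarith [sq_nonneg (u - ρ*t), sq_nonneg (ρ*u - t), sq_nonneg u, sq_nonneg t, hρ2]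
    have : -(u^2 - 2*ρ*u*t + t^2)/(2*(1-ρ^2)) ≤ -((u^2 + t^2)/4) := by
      rw [neg_div]
      linarith
    linarith
  calc |x - xbar| * bivariateDensity xbar zbar σx σz ρ x z
      ≤ |x - xbar| * (C * (Real.exp (-((x - xbar)/σx)^2/4) * Real.exp (-((z - zbar)/σz)^2/4))) :=
        mul_le_mul_of_nonneg_left hkey (abs_nonneg _)
    _ = C * ((|x - xbar| * Real.exp (-(1/(4*σx^2)) * (x - xbar)^2))
        * Real.exp (-(1/(4*σz^2)) * (z - zbar)^2)) := by
        rw [show -((x - xbar)/σx)^2/4 = -(1/(4*σx^2)) * (x - xbar)^2 by field_simp,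
          show -((z - zbar)/σz)^2/4 = -(1/(4*σz^2)) * (z - zbar)^2 by field_simp]
        ring

end Part2

lemma part2 (xbar zbar σx σz γ : ℝ) (hσx : 0 < σx) (hσz : 0 < σz)
    (ρ : ℝ) (hργ : ρ = γ / (σx * σz)) (hρ : ρ ∈ Set.Ioo (-1 : ℝ) 1) :
    (∫ p : ℝ × ℝ, (p.1 - xbar) * sgn p.2 * bivariateDensity xbar zbar σx σz ρ p.1 p.2) =
      2 * γ * stdNormalPDF (zbar / σz) / σz := by
  obtain ⟨hρ1, hρ2'⟩ := hρ
  have hρ2 : ρ^2 < 1 := by nlinarith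
  have h1 : (0:ℝ) < 1 - ρ^2 := by linarith
  have hq0 : 0 < Real.sqrt (1 - ρ^2) := Real.sqrt_pos.2 h1
  have hInt := hintegrable xbar zbar σx σz ρ hσx hσz hρ2
  rw [Measure.volume_eq_prod] at hInt ⊢
  rw [integral_prod_symm _ hInt]
  -- inner integral
  have hinner : ∀ z : ℝ, (∫ x : ℝ, (x - xbar) * sgn z * bivariateDensity xbar zbar σx σz ρ x z)
      = (ρ * σx * σz⁻¹) * (sgn z * (((z - zbar)/σz) * stdNormalPDF ((z - zbar)/σz))) := by
    intro z
    have hrw : (fun x : ℝ => (x - xbar) * sgn z * bivariateDensity xbar zbar σx σz ρ x z)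
        = fun x : ℝ => (sgn z * (σz⁻¹ * stdNormalPDF ((z - zbar)/σz)))
          * ((x - xbar) * ((σx * Real.sqrt (1 - ρ^2))⁻¹
            * stdNormalPDF ((x - (xbar + ρ * σx * ((z - zbar)/σz))) / (σx * Real.sqrt (1 - ρ^2))))) := by
      funext x
      rw [hfact xbar zbar σx σz ρ hσx hσz hρ2 x z]
      ring
    rw [hrw, integral_const_mul,
      hmoment xbar (xbar + ρ * σx * ((z - zbar)/σz)) (σx * Real.sqrt (1 - ρ^2)) (by positivity)]
    ring
  simp only [hinner]
  rw [integral_const_mul]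
  -- substitute z = σz t + zbar
  have hW : ∀ z : ℝ, sgn z * (((z - zbar)/σz) * stdNormalPDF ((z - zbar)/σz))
      = (fun y : ℝ => sgn (σz * y + zbar) * (y * stdNormalPDF y)) ((z - zbar)/σz) := by
    intro z
    simp only
    rw [show σz * ((z - zbar)/σz) + zbar = z by field_simp; ring]
  simp only [hW]
  rw [show (fun z : ℝ => (fun y : ℝ => sgn (σz * y + zbar) * (y * stdNormalPDF y)) ((z - zbar)/σz))
      = fun z : ℝ => (fun w : ℝ => (fun y : ℝ => sgn (σz * y + zbar) * (y * stdNormalPDF y)) (w / σz)) (z - zbar)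
    from rfl]
  rw [integral_sub_right_eq_self
    (fun w : ℝ => (fun y : ℝ => sgn (σz * y + zbar) * (y * stdNormalPDF y)) (w / σz)) zbar]
  rw [Measure.integral_comp_div (fun y : ℝ => sgn (σz * y + zbar) * (y * stdNormalPDF y)) σz]
  have hsgn : ∀ y : ℝ, sgn (σz * y + zbar) = sgn (y + zbar / σz) := by
    intro y
    unfold sgn
    have : (0 < σz * y + zbar) ↔ (0 < y + zbar / σz) := by
      rw [show y + zbar / σz = (σz * y + zbar) / σz by field_simp]
      rw [lt_div_iff₀ hσz]
      simp
    simp only [this]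
  have hKform : (fun y : ℝ => sgn (σz * y + zbar) * (y * stdNormalPDF y))
      = fun y : ℝ => y * sgn (y + zbar / σz) * stdNormalPDF y := by
    funext y
    rw [hsgn y]
    ring
  rw [hKform, K (zbar / σz)]
  have hγ : γ = ρ * σx * σz := by
    rw [hργ]; field_simp
  rw [abs_of_pos hσz, smul_eq_mul, hγ]
  field_simp

/-- Stein's-lemma-type identity: for a standard Gaussian `w` and constant `c`,
`E[w sign(w + c)] = 2 N(c; 0, 1)`; more generally, for jointly Gaussian `(x, z)` with
`z ~ N(z̄, σ_z²)` and `Cov(x, z) = γ`, `E[(x − x̄) sign(z)] = 2 γ N(z̄/σ_z; 0, 1) / σ_z`. -/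
theorem stein_sign_identity :
    (∀ c : ℝ, (∫ w, w * sgn (w + c) ∂(ProbabilityTheory.gaussianReal 0 1)) =
        2 * stdNormalPDF c) ∧
    (∀ xbar zbar σx σz γ : ℝ, 0 < σx → 0 < σz →
      ∀ ρ : ℝ, ρ = γ / (σx * σz) → ρ ∈ Set.Ioo (-1 : ℝ) 1 →
      (∫ p : ℝ × ℝ, (p.1 - xbar) * sgn p.2 * bivariateDensity xbar zbar σx σz ρ p.1 p.2) =
        2 * γ * stdNormalPDF (zbar / σz) / σz) := by
  exact ⟨part1, fun xbar zbar σx σz γ hσx hσz ρ hργ hρ =>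
    part2 xbar zbar σx σz γ hσx hσz ρ hργ hρ⟩
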